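/- Let n ≥ 8 be an even integer. For every 0 ≤ j ≤ n−1, the line L_j contains at least ⌊n/3⌋ points of ℬ_n; that is, the finite set ℬ_n ∩ L_j has cardinality at least ⌊n/3⌋. -/

import Mathlib

open Complex

/-- `P n j = exp(2πij/n)`. -/
noncomputable def Ppt (n j : ℕ) : ℂ := Complex.exp (2 * Real.pi * Complex.I * j / n)

/-- `Q n j = -exp(-4πij/n)`. -/
noncomputable def Qpt (n j : ℕ) : ℂ := -Complex.exp (-(4 * Real.pi * Complex.I * j) / n)

open scoped Classical in
/-- The `j`-th line of the Böröczky configuration: the line through `P n j` and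
`Q n j` if they are distinct, and the tangent line to the unit circle at `P n j`
otherwise (identifying ℝ² with ℂ). -/
noncomputable def Bline (n j : ℕ) : Set ℂ :=
  if Ppt n j = Qpt n j then
    {z : ℂ | (z * (starRingEnd ℂ) (Ppt n j)).re = 1}
  else
    {z : ℂ | ((z - Ppt n j) * (starRingEnd ℂ) (Qpt n j - Ppt n j)).im = 0}

/-- The set of triple points of the Böröczky configuration: points lying on at
least three of the lines `L_0, …, L_{n-1}`. -/
def TriplePts (n : ℕ) : Set ℂ :=
  {z : ℂ | 3 ≤ ({j : ℕ | j < n ∧ z ∈ Bline n j} : Set ℕ).ncard}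

/-- `exp(2πit/n)` for an integer `t`. -/
noncomputable def ee (n : ℕ) (t : ℤ) : ℂ := Complex.exp (2 * Real.pi * Complex.I * t / n)

lemma ee_add (n : ℕ) (s t : ℤ) : ee n (s + t) = ee n s * ee n t := by
  rw [ee, ee, ee, ← Complex.exp_add]
  congr 1
  push_cast
  ring

lemma ee_zero (n : ℕ) : ee n 0 = 1 := by simp [ee]

lemma ee_mul_neg (n : ℕ) (t : ℤ) : ee n t * ee n (-t) = 1 := by
  rw [← ee_add]; simp [ee_zero]

lemma ee_ne_zero (n : ℕ) (t : ℤ) : ee n t ≠ 0 := Complex.exp_ne_zero _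

lemma conj_ee (n : ℕ) (t : ℤ) : (starRingEnd ℂ) (ee n t) = ee n (-t) := by
  rw [ee, ee, ← Complex.exp_conj]
  congr 1
  simp [map_div₀, map_ofNat]

lemma ee_period (n : ℕ) (hn : n ≠ 0) (r t : ℤ) : ee n (r + n * t) = ee n r := by
  rw [ee, ee]
  have hnc : (n : ℂ) ≠ 0 := Nat.cast_ne_zero.2 hn
  have h1 : (2 * Real.pi * Complex.I * ((r : ℂ) + (n : ℂ) * (t : ℂ)) / n : ℂ)
      = 2 * Real.pi * Complex.I * r / n + t * (2 * Real.pi * Complex.I) := by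
    field_simp
  have h0 : (((r + n * t : ℤ)) : ℂ) = (r : ℂ) + (n : ℂ) * (t : ℂ) := by push_cast; ring
  rw [h0, h1, Complex.exp_add, Complex.exp_int_mul_two_pi_mul_I, mul_one]

lemma ee_inj (n : ℕ) (hn : n ≠ 0) {a b : ℕ} (ha : a < n) (hb : b < n)
    (h : ee n a = ee n b) : a = b := by
  rw [ee, ee, Complex.exp_eq_exp_iff_exists_int] at h
  obtain ⟨t, ht⟩ := h
  have hnc : (n : ℂ) ≠ 0 := Nat.cast_ne_zero.2 hn
  have h2 : (a : ℂ) = b + t * n := by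
    have h4 : (2 * Real.pi * Complex.I) * (a : ℂ)
        = (2 * Real.pi * Complex.I) * ((b : ℂ) + t * n) := by
      field_simp at ht
      push_cast at ht
      linear_combination (2 * Real.pi * Complex.I) * ht
    exact mul_left_cancel₀ Complex.two_pi_I_ne_zero h4
  have h3 : (a : ℤ) = b + t * n := by exact_mod_cast h2
  have hn0 : (0:ℤ) < (n:ℤ) := by exact_mod_cast Nat.pos_of_ne_zero hn
  obtain ⟨d, hd, hdd⟩ : ∃ d : ℤ, (a:ℤ) = b + d ∧ (d ≤ -n ∨ d = 0 ∨ (n:ℤ) ≤ d) := by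
    refine ⟨t * n, h3, ?_⟩
    rcases lt_trichotomy t 0 with h|h|h
    · left; nlinarith
    · right; left; simp [h]
    · right; right; nlinarith
  omega

lemma Ppt_eq (n j : ℕ) : Ppt n j = ee n (j : ℤ) := by
  rw [Ppt, ee]; norm_num

lemma Qpt_eq (n j : ℕ) : Qpt n j = -ee n (-(2 * (j:ℤ))) := by
  rw [Qpt, ee]
  congr 2
  push_cast
  ring

lemma re_eq_one_iff (w : ℂ) : w.re = 1 ↔ w + (starRingEnd ℂ) w = 2 := by
  rw [Complex.add_conj]
  constructor
  · intro h; rw [h]; norm_num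
  · intro h
    have : (2 * w.re : ℝ) = 2 := by exact_mod_cast h
    linarith

lemma im_eq_zero_iff (w : ℂ) : w.im = 0 ↔ w - (starRingEnd ℂ) w = 0 := by
  rw [sub_eq_zero]
  constructor
  · intro h; exact (Complex.conj_eq_iff_im.2 h).symm
  · intro h; exact Complex.conj_eq_iff_im.1 h.symm

lemma iff_zero_of_factor {A B c : ℂ} (hc : c ≠ 0) (h : A = c * B) : A = 0 ↔ B = 0 := by
  constructor
  · intro h0
    have h4 : c * B = 0 := by rw [← h]; exact h0
    exact (mul_eq_zero.1 h4).resolve_left hc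
  · intro h0; rw [h, h0, mul_zero]

/-- The `j`-th Böröczky line as a linear equation in `z` and `conj z`. -/
lemma mem_bline (n : ℕ) (j : ℕ) (z : ℂ) :
    z ∈ Bline n j ↔
      z - ee n (-(j:ℤ)) * (starRingEnd ℂ) z = ee n (j:ℤ) - ee n (-(2*(j:ℤ))) := by
  set x := ee n (j:ℤ) with hxdef
  set y := ee n (-(j:ℤ)) with hydef
  set u := ee n (-(2*(j:ℤ))) with hudef
  set v := ee n (2*(j:ℤ)) with hvdef
  set w := (starRingEnd ℂ) z with hwdef
  have h1 : x * y = 1 := ee_mul_neg n (j:ℤ)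
  have h2 : u * v = 1 := by
    have := ee_mul_neg n (-(2*(j:ℤ))); rw [neg_neg] at this; exact this
  have h3 : x * u = y := by
    rw [hxdef, hudef, hydef, ← ee_add]; congr 1; ring
  have hjj : y * y = u := by
    rw [hydef, hudef, ← ee_add]; congr 1; ring
  have hconjP : (starRingEnd ℂ) (Ppt n j) = y := by rw [Ppt_eq, conj_ee]
  have hconjQ : (starRingEnd ℂ) (Qpt n j) = -v := by
    rw [Qpt_eq, map_neg, conj_ee, neg_neg]
  have hconjy : (starRingEnd ℂ) y = x := by rw [hydef, conj_ee, neg_neg]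
  rw [Bline]
  split_ifs with hdeg
  · -- degenerate: Ppt = Qpt, i.e. x = -u
    have hdeg' : x = -u := by rw [hxdef, ← Ppt_eq, hdeg, Qpt_eq, hudef]
    rw [Set.mem_setOf_eq, hconjP, re_eq_one_iff, map_mul, hconjy, ← hwdef]
    have key : (z * y + w * x) - 2 = y * ((z - y * w) - (x - u)) := by
      linear_combination w * hjj + (w - y) * hdeg' + 2 * h1
    rw [← sub_eq_zero (a := z * y + w * x), ← sub_eq_zero (a := z - y * w)]
    exact iff_zero_of_factor (ee_ne_zero n _) key
  · -- nondegenerate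
    have hPQ : Qpt n j - Ppt n j ≠ 0 := sub_ne_zero.2 (Ne.symm hdeg)
    have hc : (-v - y : ℂ) ≠ 0 := by
      intro h
      apply hPQ
      have h5 : (starRingEnd ℂ) (Qpt n j - Ppt n j) = 0 := by
        rw [map_sub, hconjQ, hconjP, h]
      simpa using congrArg (starRingEnd ℂ) h5
    rw [Set.mem_setOf_eq, im_eq_zero_iff, map_mul, Complex.conj_conj, map_sub, map_sub, hconjQ,
      hconjP, Qpt_eq, Ppt_eq, ← hwdef, ← hxdef, ← hudef]
    have key : (z - x) * (-v - y) - (w - y) * (-u - x)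
        = (-v - y) * ((z - y * w) - (x - u)) := by
      linear_combination (-u * w - 1) * h1 + (1 - x * w) * h2 + (v + y) * w * h3
    rw [← sub_eq_zero (a := z - y * w)]
    exact iff_zero_of_factor hc key

lemma ee_neg_inj (n : ℕ) (hn : n ≠ 0) {a b : ℕ} (ha : a < n) (hb : b < n)
    (h : ee n (-(a:ℤ)) = ee n (-(b:ℤ))) : a = b := by
  apply ee_inj n hn ha hb
  have := congrArg (starRingEnd ℂ) h
  rwa [conj_ee, conj_ee, neg_neg, neg_neg] at this

/-- If `a + b + c ≡ 0 (mod n)` then `ω^a + ω^b + ω^c` lies on the `a`-th line. -/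
lemma mem_bline_of_sum (n : ℕ) (hn : n ≠ 0) (a b c : ℕ) (t : ℤ)
    (hsum : (a:ℤ) + b + c = n * t) :
    ee n (a:ℤ) + ee n (b:ℤ) + ee n (c:ℤ) ∈ Bline n a := by
  rw [mem_bline, map_add, map_add, conj_ee, conj_ee, conj_ee]
  have haa : ee n (-(a:ℤ)) * ee n (-(a:ℤ)) = ee n (-(2*(a:ℤ))) := by
    rw [← ee_add]; congr 1; ring
  have hab : ee n (-(a:ℤ)) * ee n (-(b:ℤ)) = ee n (c:ℤ) := by
    rw [← ee_add]
    have h6 : (-(a:ℤ)) + (-(b:ℤ)) = (c:ℤ) + n * (-t) := by linear_combination -hsum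
    rw [h6, ee_period n hn]
  have hac : ee n (-(a:ℤ)) * ee n (-(c:ℤ)) = ee n (b:ℤ) := by
    rw [← ee_add]
    have h6 : (-(a:ℤ)) + (-(c:ℤ)) = (b:ℤ) + n * (-t) := by linear_combination -hsum
    rw [h6, ee_period n hn]
  linear_combination -haa - hab - hac

lemma bline_inter_subsingleton (n : ℕ) (hn : n ≠ 0) {i j : ℕ} (hi : i < n) (hj : j < n)
    (hne : i ≠ j) : (Bline n i ∩ Bline n j).Subsingleton := by
  intro z hz z' hz'
  obtain ⟨h1, h2⟩ := hz
  obtain ⟨h3, h4⟩ := hz'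
  rw [mem_bline] at h1 h2 h3 h4
  have hy : ee n (-(i:ℤ)) ≠ ee n (-(j:ℤ)) := fun h => hne (ee_neg_inj n hn hi hj h)
  have h5 : (ee n (-(i:ℤ)) - ee n (-(j:ℤ))) * ((starRingEnd ℂ) z - (starRingEnd ℂ) z') = 0 := by
    linear_combination -h1 + h3 + h2 - h4
  have h6 : (starRingEnd ℂ) z = (starRingEnd ℂ) z' := by
    rcases mul_eq_zero.1 h5 with h | h
    · exact absurd (sub_eq_zero.1 h) hy
    · exact sub_eq_zero.1 h
  have h7 : z - z' = 0 := by linear_combination h1 - h3 + ee n (-(i:ℤ)) * h6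
  exact sub_eq_zero.1 h7

lemma triple_inter_finite (n : ℕ) (hn : n ≠ 0) {j : ℕ} (hj : j < n) :
    (TriplePts n ∩ Bline n j).Finite := by
  have hfin : (⋃ i ∈ {i : ℕ | i < n ∧ i ≠ j}, (Bline n i ∩ Bline n j)).Finite := by
    apply Set.Finite.biUnion ((Set.finite_lt_nat n).subset (fun i hi => hi.1))
    intro i hi
    exact (bline_inter_subsingleton n hn hi.1 hj hi.2).finite
  apply hfin.subset
  rintro z ⟨hz3, hzj⟩
  have hz3' : 3 ≤ ({i : ℕ | i < n ∧ z ∈ Bline n i} : Set ℕ).ncard := hz3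
  have hex : ∃ i, i < n ∧ i ≠ j ∧ z ∈ Bline n i := by
    by_contra hcon
    push_neg at hcon
    have hsub : ({i : ℕ | i < n ∧ z ∈ Bline n i} : Set ℕ) ⊆ {j} := by
      rintro i ⟨hi1, hi2⟩
      by_contra hij
      exact hcon i hi1 hij hi2
    have := Set.ncard_le_ncard hsub (Set.finite_singleton j)
    rw [Set.ncard_singleton] at this
    omega
  obtain ⟨i, hi1, hi2, hi3⟩ := hex
  exact Set.mem_biUnion (show i ∈ {i : ℕ | i < n ∧ i ≠ j} from ⟨hi1, hi2⟩) ⟨hi3, hzj⟩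

lemma mem_triplePts (n : ℕ) (hn : n ≠ 0) {a b c : ℕ} (ha : a < n) (hb : b < n) (hc : c < n)
    (hab : a ≠ b) (hac : a ≠ c) (hbc : b ≠ c) (t : ℤ) (hsum : (a:ℤ) + b + c = n * t) :
    ee n (a:ℤ) + ee n (b:ℤ) + ee n (c:ℤ) ∈ TriplePts n := by
  have h1 : ee n (a:ℤ) + ee n (b:ℤ) + ee n (c:ℤ) ∈ Bline n a :=
    mem_bline_of_sum n hn a b c t hsum
  have h2 : ee n (a:ℤ) + ee n (b:ℤ) + ee n (c:ℤ) ∈ Bline n b := by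
    have := mem_bline_of_sum n hn b a c t (by linarith)
    have e : ee n (b:ℤ) + ee n (a:ℤ) + ee n (c:ℤ)
        = ee n (a:ℤ) + ee n (b:ℤ) + ee n (c:ℤ) := by ring
    rwa [e] at this
  have h3 : ee n (a:ℤ) + ee n (b:ℤ) + ee n (c:ℤ) ∈ Bline n c := by
    have := mem_bline_of_sum n hn c a b t (by linarith)
    have e : ee n (c:ℤ) + ee n (a:ℤ) + ee n (b:ℤ)
        = ee n (a:ℤ) + ee n (b:ℤ) + ee n (c:ℤ) := by ring
    rwa [e] at this
  show 3 ≤ _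
  have hsub : ({a, b, c} : Set ℕ) ⊆
      {i : ℕ | i < n ∧ ee n (a:ℤ) + ee n (b:ℤ) + ee n (c:ℤ) ∈ Bline n i} := by
    rintro i (rfl | rfl | rfl)
    · exact ⟨ha, h1⟩
    · exact ⟨hb, h2⟩
    · exact ⟨hc, h3⟩
  have h3c : ({a, b, c} : Set ℕ).ncard = 3 :=
    Set.ncard_eq_three.2 ⟨a, b, c, hab, hac, hbc, rfl⟩
  have := Set.ncard_le_ncard hsub ((Set.finite_lt_nat n).subset (fun i hi => hi.1))
  omega

/-- For even `n ≥ 8`, every line of the Böröczky configuration contains at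
least `⌊n/3⌋` triple points. -/
theorem boroczky_points_on_line (n : ℕ) (hn : 8 ≤ n) (heven : Even n) :
    ∀ j, j < n →
      (TriplePts n ∩ Bline n j).Finite ∧ n / 3 ≤ (TriplePts n ∩ Bline n j).ncard := by
  intro j hj
  have hn0 : n ≠ 0 := by omega
  refine ⟨triple_inter_finite n hn0 hj, ?_⟩
  classical
  set mf : ℕ → ℕ := fun k => if j + k ≤ n then n - (j + k) else 2*n - (j + k) with hmf
  set f : ℕ → ℂ := fun k => ee n (j:ℤ) + ee n (k:ℤ) + ee n ((mf k : ℕ):ℤ) with hf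
  set S : Finset ℕ := (Finset.range n).filter
      (fun k => k ≠ j ∧ 2*j+k ≠ n ∧ 2*j+k ≠ 2*n ∧ j+2*k ≠ n ∧ j+2*k ≠ 2*n) with hS
  have hmem : ∀ k ∈ S, k < n ∧ k ≠ j ∧ 2*j+k ≠ n ∧ 2*j+k ≠ 2*n ∧ j+2*k ≠ n ∧ j+2*k ≠ 2*n := by
    intro k hk
    simp only [hS, Finset.mem_filter, Finset.mem_range] at hk
    tauto
  have hmfk : ∀ k ∈ S, mf k < n ∧ (j + k + mf k = n ∨ j + k + mf k = 2*n)
      ∧ mf k ≠ j ∧ mf k ≠ k := by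
    intro k hk
    obtain ⟨h1, h2, h3, h4, h5, h6⟩ := hmem k hk
    simp only [hmf]
    split_ifs <;> omega
  have hsumZ : ∀ k ∈ S, ∃ t : ℤ, (j:ℤ) + k + mf k = n * t := by
    intro k hk
    rcases (hmfk k hk).2.1 with h | h
    · exact ⟨1, by omega⟩
    · exact ⟨2, by omega⟩
  have hfmem : ∀ k ∈ S, f k ∈ TriplePts n ∩ Bline n j := by
    intro k hk
    obtain ⟨t, ht⟩ := hsumZ k hk
    obtain ⟨hk1, hk2, _⟩ := hmem k hk
    obtain ⟨hm1, _, hm3, hm4⟩ := hmfk k hk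
    exact ⟨mem_triplePts n hn0 hj hk1 hm1 (Ne.symm hk2) (Ne.symm hm3) (Ne.symm hm4) t ht,
      mem_bline_of_sum n hn0 j k (mf k) t ht⟩
  have hprod : ∀ k ∈ S, ee n (k:ℤ) * ee n ((mf k : ℕ):ℤ) = ee n (-(j:ℤ)) := by
    intro k hk
    obtain ⟨t, ht⟩ := hsumZ k hk
    rw [← ee_add]
    have h6 : (k:ℤ) + (mf k : ℤ) = (-(j:ℤ)) + n * t := by linear_combination ht
    rw [h6, ee_period n hn0]
  have hfiber : ∀ k ∈ S, ∀ k' ∈ S, f k = f k' → k' = k ∨ k' = mf k := by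
    intro k hk k' hk'
    intro hfe
    have hseq : ee n (k:ℤ) + ee n ((mf k : ℕ):ℤ) = ee n (k':ℤ) + ee n ((mf k' : ℕ):ℤ) := by
      have := hfe
      simp only [hf] at this
      linear_combination this
    have hquad : (ee n (k':ℤ) - ee n (k:ℤ)) * (ee n (k':ℤ) - ee n ((mf k : ℕ):ℤ)) = 0 := by
      linear_combination (-(ee n (k':ℤ))) * hseq + hprod k hk - hprod k' hk'
    rcases mul_eq_zero.1 hquad with h | h
    · left
      exact ee_inj n hn0 (hmem k' hk').1 (hmem k hk).1 (sub_eq_zero.1 h)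
    · right
      exact ee_inj n hn0 (hmem k' hk').1 (hmfk k hk).1 (sub_eq_zero.1 h)
  have hfiber2 : ∀ b ∈ S.image f, (S.filter (fun a => f a = b)).card ≤ 2 := by
    intro b hb
    obtain ⟨k, hk, rfl⟩ := Finset.mem_image.1 hb
    have hsub : S.filter (fun a => f a = f k) ⊆ {k, mf k} := by
      intro k' hk'
      rw [Finset.mem_filter] at hk'
      rcases hfiber k hk k' hk'.1 hk'.2.symm with h | h <;> simp [h]
    calc (S.filter (fun a => f a = f k)).card ≤ ({k, mf k} : Finset ℕ).card :=
          Finset.card_le_card hsub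
      _ ≤ 2 := (Finset.card_insert_le _ _).trans (by simp)
  have himg : S.card ≤ 2 * (S.image f).card := Finset.card_le_mul_card_image S 2 hfiber2
  -- lower bound on S.card
  set B : Finset ℕ := {j, n - 2*j, 2*n - 2*j, (n-j)/2, (2*n-j)/2} with hB
  have hBcard : B.card ≤ 5 := by
    calc B.card ≤ ({n - 2*j, 2*n - 2*j, (n-j)/2, (2*n-j)/2} : Finset ℕ).card + 1 :=
          Finset.card_insert_le _ _
      _ ≤ (({2*n - 2*j, (n-j)/2, (2*n-j)/2} : Finset ℕ).card + 1) + 1 :=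
          Nat.add_le_add_right (Finset.card_insert_le _ _) 1
      _ ≤ ((({(n-j)/2, (2*n-j)/2} : Finset ℕ).card + 1) + 1) + 1 :=
          Nat.add_le_add_right (Nat.add_le_add_right (Finset.card_insert_le _ _) 1) 1
      _ ≤ (((({(2*n-j)/2} : Finset ℕ).card + 1) + 1) + 1) + 1 :=
          Nat.add_le_add_right (Nat.add_le_add_right
            (Nat.add_le_add_right (Finset.card_insert_le _ _) 1) 1) 1
      _ ≤ 5 := by simp
  have hsubS : Finset.range n \ B ⊆ S := by
    intro k hk
    rw [Finset.mem_sdiff, Finset.mem_range] at hk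
    obtain ⟨hk1, hk2⟩ := hk
    have hkB : k ≠ j ∧ k ≠ n - 2*j ∧ k ≠ 2*n - 2*j ∧ k ≠ (n-j)/2 ∧ k ≠ (2*n-j)/2 := by
      constructor
      · intro h; exact hk2 (by simp [hB, h])
      constructor
      · intro h; exact hk2 (by simp [hB, h])
      constructor
      · intro h; exact hk2 (by simp [hB, h])
      constructor
      · intro h; exact hk2 (by simp [hB, h])
      · intro h; exact hk2 (by simp [hB, h])
    rw [hS, Finset.mem_filter, Finset.mem_range]
    refine ⟨hk1, hkB.1, ?_, ?_, ?_, ?_⟩ <;> omega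
  have hScard : n - 5 ≤ S.card := by
    have h1 := Finset.card_le_card hsubS
    have h2 := Finset.le_card_sdiff B (Finset.range n)
    rw [Finset.card_range] at h2
    omega
  -- conclude
  have hsubset : (↑(S.image f) : Set ℂ) ⊆ TriplePts n ∩ Bline n j := by
    intro z hz
    rw [Finset.coe_image, Set.mem_image] at hz
    obtain ⟨k, hk, rfl⟩ := hz
    exact hfmem k (by exact_mod_cast hk)
  have hfin := triple_inter_finite n hn0 hj
  have h9 : (S.image f).card ≤ (TriplePts n ∩ Bline n j).ncard := by
    rw [← Set.ncard_coe_finset]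
    exact Set.ncard_le_ncard hsubset hfin
  have hpar : n % 2 = 0 := Nat.even_iff.1 heven
  omega
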